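/- Let d = 2 and 0 < a < b < R, and let ζ be the compressed coordinate transformation. Define β : [0, b] → ℝ by β(0) = 1 and β(r) = ζ(r)ζ'(r)/r for r ∈ (0, b], and define the matrix field M on the closed ball {x ∈ ℝ² : |x| ≤ b} by M(x) = I for |x| ≤ a and M(x)w = (ζ(r)/(r ζ'(r))) P_x(w) + (r ζ'(r)/ζ(r))(w − P_x(w)) for a < |x| ≤ b, where r = |x|. Then β is continuous and strictly positive on [0, b], and for every x with |x| ≤ b, M(x) is a symmetric positive definite linear map, and x ↦ M(x) is continuous on the closed ball of radius b. -/

import Mathlib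

open scoped RealInnerProductSpace

noncomputable section

/-- The orthogonal projection of `w` onto the span of `e_r = x/‖x‖`. -/
def radialProj {E : Type*} [NormedAddCommGroup E] [InnerProductSpace ℝ E]
    (x w : E) : E :=
  ⟪w, ‖x‖⁻¹ • x⟫ • (‖x‖⁻¹ • x)

namespace Stmt11Aux


open Set

section Aux
variable {a b R : ℝ} (ha : 0 < a) (hab : a < b) (hbR : b < R)
variable {η ζ : ℝ → ℝ}
variable (hη : ∀ r : ℝ, η r =
      (a ^ 2 * (R - b) + r * (a ^ 2 + (b - 2 * a) * R)) / ((b - r) * (R - b) + (b - a) ^ 2))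
variable (hζ : ∀ r : ℝ, ζ r = if r < a then r else η r)

/-- denominator -/
def den (a b R r : ℝ) : ℝ := (b - r) * (R - b) + (b - a) ^ 2

lemma den_pos (hab : a < b) (hbR : b < R) {r : ℝ} (hr : r ≤ b) : 0 < den a b R r := by
  unfold den; nlinarith

include hη hbR in
lemma eta_hasDerivAt {r : ℝ} (hr : den a b R r ≠ 0) :
    HasDerivAt η (((b-a)*(R-a))^2 / (den a b R r)^2) r := by
  have hnum : HasDerivAt (fun r : ℝ => a ^ 2 * (R - b) + r * (a ^ 2 + (b - 2 * a) * R))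
      (a ^ 2 + (b - 2 * a) * R) r := by
    simpa using ((hasDerivAt_id r).mul_const (a ^ 2 + (b - 2 * a) * R)).const_add (a^2*(R-b))
  have hden : HasDerivAt (fun r : ℝ => (b - r) * (R - b) + (b - a) ^ 2) (-(R-b)) r := by
    simpa using (((hasDerivAt_id r).const_sub b).mul_const (R-b)).add_const ((b-a)^2)
  have h := hnum.div hden hr
  have heq : η = fun r => (a ^ 2 * (R - b) + r * (a ^ 2 + (b - 2 * a) * R)) /
      ((b - r) * (R - b) + (b - a) ^ 2) := funext hη
  rw [heq]
  refine h.congr_deriv ?_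
  unfold den
  rw [div_eq_div_iff (by unfold den at hr; positivity) (by unfold den at hr; positivity)]
  ring
end Aux

section Aux2
variable {a b R : ℝ} (ha : 0 < a) (hab : a < b) (hbR : b < R)
variable {η ζ : ℝ → ℝ}
variable (hη : ∀ r : ℝ, η r =
      (a ^ 2 * (R - b) + r * (a ^ 2 + (b - 2 * a) * R)) / ((b - r) * (R - b) + (b - a) ^ 2))
variable (hζ : ∀ r : ℝ, ζ r = if r < a then r else η r)

include hη hab hbR in
lemma eta_a : η a = a := by
  have hd := den_pos hab hbR (le_of_lt hab); unfold den at hd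
  rw [hη, div_eq_iff (ne_of_gt hd)]
  ring

include hη hab hbR ha in
lemma eta_ge {r : ℝ} (h1 : a ≤ r) (h2 : r ≤ b) : a ≤ η r := by
  have hd := den_pos hab hbR h2; unfold den at hd
  rw [hη, le_div_iff₀ hd]
  have : a ^ 2 * (R - b) + r * (a ^ 2 + (b - 2 * a) * R)
      = a * ((b - r) * (R - b) + (b - a) ^ 2) + (r - a) * (b - a) * (R - a) := by ring
  rw [this]
  nlinarith [mul_nonneg (mul_nonneg (sub_nonneg.2 h1) (sub_nonneg.2 (le_of_lt hab)))
    (sub_nonneg.2 (le_of_lt (lt_trans hab hbR)))]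

include hζ in
lemma zeta_lt {r : ℝ} (h : r < a) : ζ r = r := by rw [hζ, if_pos h]

include hζ in
lemma zeta_ge {r : ℝ} (h : a ≤ r) : ζ r = η r := by rw [hζ, if_neg (not_lt.2 h)]

include hζ in
lemma zeta_hasDerivAt_lt {r : ℝ} (h : r < a) : HasDerivAt ζ 1 r := by
  have : ∀ᶠ y in nhds r, ζ y = id y := by
    filter_upwards [Iio_mem_nhds h] with y hy using zeta_lt hζ hy
  exact (hasDerivAt_id r).congr_of_eventuallyEq this

include hζ hη hbR in
lemma zeta_hasDerivAt_gt {r : ℝ} (h : a < r) (hrb : den a b R r ≠ 0) :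
    HasDerivAt ζ (((b-a)*(R-a))^2 / (den a b R r)^2) r := by
  have : ∀ᶠ y in nhds r, ζ y = η y := by
    filter_upwards [Ioi_mem_nhds h] with y hy using zeta_ge hζ (le_of_lt hy)
  exact (eta_hasDerivAt hbR hη hrb).congr_of_eventuallyEq this

lemma den_a (a b R : ℝ) : den a b R a = (b-a)*(R-a) := by unfold den; ring

include hζ hη ha hab hbR in
lemma zeta_hasDerivAt_a : HasDerivAt ζ 1 a := by
  have hL : HasDerivWithinAt ζ 1 (Iic a) a := by
    refine (hasDerivWithinAt_id a (Iic a)).congr (fun y hy => ?_) ?_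
    · rcases lt_or_eq_of_le (mem_Iic.1 hy) with h | h
      · exact zeta_lt hζ h
      · rw [h, zeta_ge hζ le_rfl, eta_a hab hbR hη]; rfl
    · rw [zeta_ge hζ le_rfl, eta_a hab hbR hη]; rfl
  have hdne : den a b R a ≠ 0 := ne_of_gt (den_pos hab hbR hab.le)
  have hR' : HasDerivWithinAt ζ 1 (Ici a) a := by
    have h1 : HasDerivWithinAt η 1 (Ici a) a := by
      have := (eta_hasDerivAt hbR hη hdne).hasDerivWithinAt (s := Ici a)
      refine this.congr_deriv ?_
      rw [den_a, div_self (by rw [den_a] at hdne; positivity)]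
    exact h1.congr (fun y hy => zeta_ge hζ hy) (zeta_ge hζ le_rfl)
  have := hL.union hR'
  rw [Iic_union_Ici, hasDerivWithinAt_univ] at this
  exact this

include hζ hη ha hab hbR in
lemma deriv_zeta {r : ℝ} (h1 : 0 < r) (h2 : r ≤ b) :
    deriv ζ r = if r < a then 1 else ((b-a)*(R-a))^2 / (den a b R r)^2 := by
  rcases lt_trichotomy r a with h | h | h
  · rw [if_pos h, (zeta_hasDerivAt_lt hζ h).deriv]
  · have hdne : den a b R a ≠ 0 := ne_of_gt (den_pos hab hbR (le_of_lt hab))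
    rw [den_a] at hdne
    rw [h, if_neg (lt_irrefl a), (zeta_hasDerivAt_a ha hab hbR hη hζ).deriv, den_a,
      div_self (by positivity)]
  · rw [if_neg (not_lt.2 (le_of_lt h)),
      (zeta_hasDerivAt_gt hbR hη hζ h (ne_of_gt (den_pos hab hbR h2))).deriv]

include hζ hη ha hab hbR in
lemma beta_val {β : ℝ → ℝ} (hβ0 : β 0 = 1)
    (hβ : ∀ r : ℝ, 0 < r → r ≤ b → β r = ζ r * deriv ζ r / r)
    {r : ℝ} (h1 : 0 ≤ r) (h2 : r ≤ b) :
    β r = if r < a then 1 else η r * (((b-a)*(R-a))^2 / (den a b R r)^2) / r := by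
  rcases eq_or_lt_of_le h1 with h | h
  · rw [← h, if_pos ha, hβ0]
  rw [hβ r h h2, deriv_zeta ha hab hbR hη hζ h h2]
  rcases lt_or_ge r a with hr | hr
  · rw [if_pos hr, if_pos hr, zeta_lt hζ hr, mul_one, div_self (ne_of_gt h)]
  · rw [if_neg (not_lt.2 hr), if_neg (not_lt.2 hr), zeta_ge hζ hr]

include hζ hη ha hab hbR in
lemma beta_pos {β : ℝ → ℝ} (hβ0 : β 0 = 1)
    (hβ : ∀ r : ℝ, 0 < r → r ≤ b → β r = ζ r * deriv ζ r / r) :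
    ∀ r ∈ Icc (0:ℝ) b, 0 < β r := by
  intro r hr
  rw [beta_val ha hab hbR hη hζ hβ0 hβ hr.1 hr.2]
  split_ifs with h
  · exact one_pos
  · push_neg at h
    have h1 : 0 < η r := lt_of_lt_of_le ha (eta_ge ha hab hbR hη h hr.2)
    have h2 : 0 < den a b R r := den_pos hab hbR hr.2
    have h3 : (0:ℝ) < b - a := by linarith
    have h4 : (0:ℝ) < R - a := by linarith
    have h5 : (0:ℝ) < r := lt_of_lt_of_le ha h
    positivity

include hζ hη ha hab hbR in
lemma beta_cont {β : ℝ → ℝ} (hβ0 : β 0 = 1)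
    (hβ : ∀ r : ℝ, 0 < r → r ≤ b → β r = ζ r * deriv ζ r / r) :
    ContinuousOn β (Icc 0 b) := by
  set g : ℝ → ℝ := fun r => η r * (((b-a)*(R-a))^2 / (den a b R r)^2) / r with hg
  have hgc : ∀ r : ℝ, 0 < r → r ≤ b → ContinuousAt g r := by
    intro r h1 h2
    have h2' : den a b R r ≠ 0 := ne_of_gt (den_pos hab hbR h2)
    have hηc : ContinuousAt η r := by
      have : Continuous (fun r : ℝ => a ^ 2 * (R - b) + r * (a ^ 2 + (b - 2 * a) * R)) := by
        fun_prop
      have hd : Continuous (fun r : ℝ => (b - r) * (R - b) + (b - a) ^ 2) := by fun_prop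
      have := (this.continuousAt (x := r)).div (hd.continuousAt) (by unfold den at h2'; exact h2')
      apply this.congr
      filter_upwards with y using (hη y).symm
    have hdenc : ContinuousAt (fun r => den a b R r) r := by unfold den; fun_prop
    exact (hηc.mul ((continuousAt_const).div (hdenc.pow 2) (pow_ne_zero 2 h2'))).div
      continuousAt_id (ne_of_gt h1)
  have hga : g a = 1 := by
    have h3 : (0:ℝ) < b - a := by linarith
    have h4 : (0:ℝ) < R - a := by linarith
    show η a * (((b-a)*(R-a))^2 / (den a b R a)^2) / a = 1
    rw [eta_a hab hbR hη, den_a, div_self (by positivity), mul_one, div_self (ne_of_gt ha)]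
  intro r hr
  rcases lt_trichotomy r a with h | h | h
  · -- locally constant 1
    apply continuousWithinAt_const.congr_of_eventuallyEq
    · filter_upwards [self_mem_nhdsWithin,
        mem_nhdsWithin_of_mem_nhds (Iio_mem_nhds h)] with y hy hy'
      rw [beta_val ha hab hbR hη hζ hβ0 hβ hy.1 hy.2, if_pos (mem_Iio.1 hy')]
    · rw [beta_val ha hab hbR hη hζ hβ0 hβ hr.1 hr.2, if_pos h]
  · -- r = a : split into Iic and Ici parts
    have hsub : Icc (0:ℝ) b ⊆ (Icc 0 b ∩ Iic r) ∪ (Icc 0 b ∩ Ici r) := by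
      intro y hy
      rcases le_total y r with h' | h'
      · exact Or.inl ⟨hy, h'⟩
      · exact Or.inr ⟨hy, h'⟩
    have hβr : β r = 1 := by
      rw [beta_val ha hab hbR hη hζ hβ0 hβ hr.1 hr.2, h, if_neg (lt_irrefl a)]
      exact hga
    have hL : ContinuousWithinAt β (Icc 0 b ∩ Iic r) r := by
      apply continuousWithinAt_const.congr _ hβr
      intro y hy
      rw [beta_val ha hab hbR hη hζ hβ0 hβ hy.1.1 hy.1.2]
      rcases lt_or_eq_of_le (mem_Iic.1 hy.2) with h' | h'
      · rw [if_pos (h ▸ h')]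
      · rw [h', h, if_neg (lt_irrefl a)]
        exact hga
    have hR' : ContinuousWithinAt β (Icc 0 b ∩ Ici r) r := by
      apply ((hgc r (h ▸ ha) hr.2).continuousWithinAt).congr _ (by
        rw [hβr, h]; exact hga.symm)
      intro y hy
      rw [beta_val ha hab hbR hη hζ hβ0 hβ hy.1.1 hy.1.2,
        if_neg (not_lt.2 (h ▸ (mem_Ici.1 hy.2)))]
    exact (hL.union hR').mono hsub
  · -- r > a : locally g
    apply ((hgc r (lt_trans ha h) hr.2).continuousWithinAt).congr_of_eventuallyEq
    · filter_upwards [self_mem_nhdsWithin,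
        mem_nhdsWithin_of_mem_nhds (Ioi_mem_nhds h)] with y hy hy'
      rw [beta_val ha hab hbR hη hζ hβ0 hβ hy.1 hy.2, if_neg (not_lt.2 (le_of_lt (mem_Ioi.1 hy')))]
    · rw [beta_val ha hab hbR hη hζ hβ0 hβ hr.1 hr.2, if_neg (not_lt.2 (le_of_lt h))]

end Aux2

open scoped RealInnerProductSpace


section MPart

local notation "E2" => EuclideanSpace ℝ (Fin 2)

variable {a b R : ℝ} (ha : 0 < a) (hab : a < b) (hbR : b < R)
variable {η ζ : ℝ → ℝ}
variable (hη : ∀ r : ℝ, η r =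
      (a ^ 2 * (R - b) + r * (a ^ 2 + (b - 2 * a) * R)) / ((b - r) * (R - b) + (b - a) ^ 2))
variable (hζ : ∀ r : ℝ, ζ r = if r < a then r else η r)
variable {M : E2 → (E2 →L[ℝ] E2)}
variable (hM1 : ∀ x : E2, ‖x‖ ≤ a → M x = ContinuousLinearMap.id ℝ E2)
variable (hM2 : ∀ x : E2, a < ‖x‖ → ‖x‖ ≤ b → ∀ w,
      M x w = (ζ ‖x‖ / (‖x‖ * deriv ζ ‖x‖)) • radialProj x w +
        ((‖x‖ * deriv ζ ‖x‖) / ζ ‖x‖) • (w - radialProj x w))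

include ha hab hbR hη hζ in
lemma zeta_pos_c {r : ℝ} (h1 : a < r) (h2 : r ≤ b) : 0 < ζ r := by
  rw [zeta_ge hζ (le_of_lt h1)]
  exact lt_of_lt_of_le ha (eta_ge ha hab hbR hη (le_of_lt h1) h2)

include ha hab hbR hη hζ in
lemma deriv_zeta_pos_c {r : ℝ} (h1 : a < r) (h2 : r ≤ b) : 0 < deriv ζ r := by
  rw [deriv_zeta ha hab hbR hη hζ (lt_trans ha h1) h2, if_neg (not_lt.2 (le_of_lt h1))]
  have h3 : (0:ℝ) < b - a := by linarith
  have h4 : (0:ℝ) < R - a := by linarith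
  have h5 := den_pos hab hbR h2 (a := a)
  positivity

include ha hab hbR hη hζ hM1 hM2 in
lemma M_sym_pd (x : E2) (hx : ‖x‖ ≤ b) :
    (∀ w z : E2, ⟪M x w, z⟫ = ⟪w, M x z⟫) ∧
    (∀ w : E2, w ≠ 0 → 0 < ⟪M x w, w⟫) := by
  rcases le_or_gt ‖x‖ a with h | h
  · rw [hM1 x h]
    refine ⟨fun w z => rfl, fun w hw => ?_⟩
    show (0:ℝ) < ⟪w, w⟫
    rw [real_inner_self_eq_norm_mul_norm]
    exact mul_pos (norm_pos_iff.mpr hw) (norm_pos_iff.mpr hw)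
  · have hx0 : x ≠ 0 := by
      intro h0; rw [h0, norm_zero] at h; exact absurd (lt_trans ha h) (lt_irrefl 0)
    set e : E2 := ‖x‖⁻¹ • x with he
    have hne : ‖e‖ = 1 := by
      rw [he, norm_smul, norm_inv, norm_norm, inv_mul_cancel₀ (norm_ne_zero_iff.2 hx0)]
    have hee : ⟪e, e⟫ = 1 := by
      rw [real_inner_self_eq_norm_mul_norm, hne, one_mul]
    set c₁ : ℝ := ζ ‖x‖ / (‖x‖ * deriv ζ ‖x‖) with hc1
    set c₂ : ℝ := (‖x‖ * deriv ζ ‖x‖) / ζ ‖x‖ with hc2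
    have hc1p : 0 < c₁ := by
      rw [hc1]
      have := zeta_pos_c ha hab hbR hη hζ h hx
      have := deriv_zeta_pos_c ha hab hbR hη hζ h hx
      have hr0 : (0:ℝ) < ‖x‖ := lt_trans ha h
      positivity
    have hc2p : 0 < c₂ := by
      rw [hc2]
      have := zeta_pos_c ha hab hbR hη hζ h hx
      have := deriv_zeta_pos_c ha hab hbR hη hζ h hx
      have hr0 : (0:ℝ) < ‖x‖ := lt_trans ha h
      positivity
    have hexp : ∀ w z : E2, ⟪M x w, z⟫ =
        c₁ * (⟪w, e⟫ * ⟪e, z⟫) + c₂ * (⟪w, z⟫ - ⟪w, e⟫ * ⟪e, z⟫) := by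
      intro w z
      rw [hM2 x h hx w]
      simp only [radialProj, ← he, inner_add_left, inner_sub_left, real_inner_smul_left]
      try ring
    constructor
    · intro w z
      rw [hexp w z, real_inner_comm ((M x) z) w, hexp z w, real_inner_comm z w,
        real_inner_comm z e, real_inner_comm e w]
      ring
    · intro w hw
      have hexp2 : ⟪(M x) w, w⟫ =
          c₁ * (⟪w, e⟫ * ⟪w, e⟫) + c₂ * (⟪w, w⟫ - ⟪w, e⟫ * ⟪w, e⟫) := by
        rw [hexp w w, real_inner_comm e w]
      rw [hexp2]
      have hcs : ⟪w, e⟫ * ⟪w, e⟫ ≤ ⟪w, w⟫ := by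
        have := real_inner_mul_inner_self_le w e
        rwa [hee, mul_one] at this
      have hww : (0:ℝ) < ⟪w, w⟫ := by
        rw [real_inner_self_eq_norm_mul_norm]
        exact mul_pos (norm_pos_iff.mpr hw) (norm_pos_iff.mpr hw)
      rcases eq_or_ne ⟪w, e⟫ 0 with h0 | h0
      · rw [h0]
        nlinarith
      · nlinarith [mul_self_pos.2 h0, mul_pos hc1p (mul_self_pos.2 h0)]

include hab hbR hη in
lemma scalar_cont {f : ℝ → ℝ} {r : ℝ} (h0 : 0 < r) (hb : r ≤ b)
    (hfa : f a = 1) (hfc : a ≤ r → ContinuousAt f r) :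
    ContinuousAt (fun s => if s ≤ a then 1 else f s) r := by
  rcases lt_trichotomy r a with h | h | h
  · apply continuousAt_const.congr_of_eventuallyEq
    filter_upwards [Iio_mem_nhds h] with y hy
    rw [if_pos (le_of_lt (mem_Iio.1 hy))]
  · have hL : ContinuousWithinAt (fun s => if s ≤ a then 1 else f s) (Iic r) r := by
      apply continuousWithinAt_const.congr
      · intro y hy
        rw [if_pos (h ▸ (mem_Iic.1 hy))]
      · rw [if_pos (le_of_eq h)]
    have hR2 : ContinuousWithinAt (fun s => if s ≤ a then 1 else f s) (Ici r) r := by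
      apply ((hfc (le_of_eq h.symm)).continuousWithinAt).congr
      · intro y hy
        rcases lt_or_eq_of_le (h ▸ (mem_Ici.1 hy) : a ≤ y) with h' | h'
        · rw [if_neg (not_le.2 h')]
        · rw [← h', if_pos le_rfl, hfa]
      · rw [if_pos (le_of_eq h), h, hfa]
    have := hL.union hR2
    rw [Iic_union_Ici] at this
    exact this.continuousAt Filter.univ_mem
  · apply (hfc (le_of_lt h)).congr_of_eventuallyEq
    filter_upwards [Ioi_mem_nhds h] with y hy
    rw [if_neg (not_le.2 (mem_Ioi.1 hy))]

include ha hab hbR hη hζ hM1 hM2 in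
lemma M_contOn : ContinuousOn M (Metric.closedBall (0 : E2) b) := by
  classical
  set K : ℝ := ((b-a)*(R-a))^2 with hK
  have hKpos : 0 < K := by
    have h3 : (0:ℝ) < b - a := by linarith
    have h4 : (0:ℝ) < R - a := by linarith
    positivity
  set Φ : ℝ → ℝ := fun r => if r ≤ a then 1 else η r * (den a b R r)^2 / (r * K) with hΦ
  set Ψ : ℝ → ℝ := fun r => if r ≤ a then 1 else (r * K) / (η r * (den a b R r)^2) with hΨ
  set Pr : E2 → (E2 →L[ℝ] E2) := fun y => (innerSL ℝ (‖y‖⁻¹ • y)).smulRight (‖y‖⁻¹ • y)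
    with hPr
  set G : E2 → (E2 →L[ℝ] E2) := fun y => ContinuousLinearMap.id ℝ E2 + (Φ ‖y‖ - 1) • Pr y +
      (Ψ ‖y‖ - 1) • (ContinuousLinearMap.id ℝ E2 - Pr y) with hG
  -- M agrees with G away from 0
  have hMG : ∀ y : E2, y ≠ 0 → ‖y‖ ≤ b → M y = G y := by
    intro y hy0 hyb
    rcases le_or_gt ‖y‖ a with h | h
    · rw [hM1 y h, hG]
      ext w
      simp only [ContinuousLinearMap.add_apply, ContinuousLinearMap.smul_apply,
        ContinuousLinearMap.sub_apply, ContinuousLinearMap.id_apply, hΦ, hΨ, if_pos h]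
      simp
    · have h0 : (0:ℝ) < ‖y‖ := lt_trans ha h
      have hdpos := den_pos hab hbR hyb (a := a)
      have hζv : ζ ‖y‖ = η ‖y‖ := zeta_ge hζ (le_of_lt h)
      have hdv : deriv ζ ‖y‖ = K / (den a b R ‖y‖)^2 := by
        rw [deriv_zeta ha hab hbR hη hζ h0 hyb, if_neg (not_lt.2 (le_of_lt h))]
      have hηpos : 0 < η ‖y‖ := lt_of_lt_of_le ha (eta_ge ha hab hbR hη (le_of_lt h) hyb)
      have hΦv : Φ ‖y‖ = ζ ‖y‖ / (‖y‖ * deriv ζ ‖y‖) := by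
        rw [hΦ]
        simp only [if_neg (not_le.2 h)]
        rw [hζv, hdv]
        field_simp
      have hΨv : Ψ ‖y‖ = (‖y‖ * deriv ζ ‖y‖) / ζ ‖y‖ := by
        rw [hΨ]
        simp only [if_neg (not_le.2 h)]
        rw [hζv, hdv]
        field_simp
      refine ContinuousLinearMap.ext fun w => ?_
      rw [hM2 y h hyb w, hG]
      simp only [ContinuousLinearMap.add_apply, ContinuousLinearMap.smul_apply,
        ContinuousLinearMap.sub_apply, ContinuousLinearMap.id_apply]
      have hPrv : Pr y w = radialProj y w := by
        rw [hPr]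
        simp only [ContinuousLinearMap.smulRight_apply, innerSL_apply_apply, radialProj]
        rw [real_inner_comm]
      rw [hPrv, hΦv, hΨv]
      set p := radialProj y w
      set u := ζ ‖y‖ / (‖y‖ * deriv ζ ‖y‖)
      set v := (‖y‖ * deriv ζ ‖y‖) / ζ ‖y‖
      module
  -- G is continuous at nonzero points of the ball
  have hGc : ∀ y : E2, y ≠ 0 → ‖y‖ ≤ b → ContinuousAt G y := by
    intro y hy0 hyb
    have h0 : (0:ℝ) < ‖y‖ := norm_pos_iff.mpr hy0
    have hnc : ContinuousAt (fun z : E2 => ‖z‖) y := continuous_norm.continuousAt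
    have hΦc : ContinuousAt Φ ‖y‖ := by
      apply scalar_cont hab hbR hη h0 hyb
      · have hda := den_pos hab hbR (le_of_lt hab) (a := a)
        rw [eta_a hab hbR hη, den_a]
        rw [den_a] at hda
        field_simp [hK]
        try ring
      · intro har
        have hd' : den a b R ‖y‖ ≠ 0 := ne_of_gt (den_pos hab hbR hyb)
        have hηc : ContinuousAt η ‖y‖ := by
          have hnum : Continuous (fun r : ℝ => a ^ 2 * (R - b) + r * (a ^ 2 + (b - 2 * a) * R)) := by
            fun_prop
          have hden : Continuous (fun r : ℝ => (b - r) * (R - b) + (b - a) ^ 2) := by fun_prop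
          have := (hnum.continuousAt (x := ‖y‖)).div hden.continuousAt
            (by unfold den at hd'; exact hd')
          apply this.congr
          filter_upwards with s using (hη s).symm
        have hdenc : ContinuousAt (fun r => den a b R r) ‖y‖ := by unfold den; fun_prop
        exact (hηc.mul (hdenc.pow 2)).div
          (continuousAt_id.mul continuousAt_const) (by positivity)
    have hΨc : ContinuousAt Ψ ‖y‖ := by
      apply scalar_cont hab hbR hη h0 hyb
      · have hda := den_pos hab hbR (le_of_lt hab) (a := a)
        rw [eta_a hab hbR hη, den_a]
        rw [den_a] at hda
        rw [hK, div_self (mul_ne_zero ha.ne' (pow_ne_zero _ hda.ne'))]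
        try ring
      · intro har
        have hd' : 0 < den a b R ‖y‖ := den_pos hab hbR hyb
        have hηpos : 0 < η ‖y‖ := lt_of_lt_of_le ha (eta_ge ha hab hbR hη har hyb)
        have hηc : ContinuousAt η ‖y‖ := by
          have hnum : Continuous (fun r : ℝ => a ^ 2 * (R - b) + r * (a ^ 2 + (b - 2 * a) * R)) := by
            fun_prop
          have hden : Continuous (fun r : ℝ => (b - r) * (R - b) + (b - a) ^ 2) := by fun_prop
          have := (hnum.continuousAt (x := ‖y‖)).div hden.continuousAt
            (by unfold den at hd'; exact ne_of_gt hd')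
          apply this.congr
          filter_upwards with s using (hη s).symm
        have hdenc : ContinuousAt (fun r => den a b R r) ‖y‖ := by unfold den; fun_prop
        exact (continuousAt_id.mul continuousAt_const).div
          (hηc.mul (hdenc.pow 2)) (by positivity)
    have hPrc : ContinuousAt Pr y := by
      have hec : ContinuousAt (fun z : E2 => ‖z‖⁻¹ • z) y :=
        ((continuous_norm.continuousAt).inv₀ (norm_ne_zero_iff.2 hy0)).smul continuousAt_id
      have hPc : Continuous (fun e : E2 => (innerSL ℝ e).smulRight e) := by
        have h1 : Continuous (fun e : E2 =>
            (ContinuousLinearMap.smulRightL ℝ E2 E2) (innerSL ℝ e)) :=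
          (ContinuousLinearMap.smulRightL ℝ E2 E2).continuous.comp (innerSL ℝ).continuous
        exact h1.clm_apply continuous_id
      exact hPc.continuousAt.comp hec
    rw [hG]
    exact (continuousAt_const.add
        (((hΦc.comp hnc).sub continuousAt_const).smul hPrc)).add
      (((hΨc.comp hnc).sub continuousAt_const).smul (continuousAt_const.sub hPrc))
  -- conclude
  intro x hx
  rw [Metric.mem_closedBall, dist_zero_right] at hx
  rcases lt_or_ge ‖x‖ a with h | h
  · apply continuousWithinAt_const.congr_of_eventuallyEq
    · filter_upwards [mem_nhdsWithin_of_mem_nhds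
        ((Metric.isOpen_ball).mem_nhds
          (by rw [Metric.mem_ball, dist_zero_right]; exact h))] with y hy
      rw [Metric.mem_ball, dist_zero_right] at hy
      exact hM1 y (le_of_lt hy)
    · exact hM1 x (le_of_lt h)
  · have hx0 : x ≠ 0 := by
      intro h0; rw [h0, norm_zero] at h; exact absurd (lt_of_lt_of_le ha h) (lt_irrefl 0)
    apply ((hGc x hx0 hx).continuousWithinAt).congr_of_eventuallyEq
    · filter_upwards [self_mem_nhdsWithin,
        mem_nhdsWithin_of_mem_nhds ((isOpen_compl_singleton (x := (0:E2))).mem_nhds hx0)]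
        with y hy hy'
      rw [Metric.mem_closedBall, dist_zero_right] at hy
      exact hMG y hy' hy
    · exact hMG x hx0 hx
end MPart

end Stmt11Aux

/-- d = 2: For the compressed coordinate transformation `ζ`, with
`β(0) = 1`, `β(r) = ζ(r)ζ'(r)/r` for `0 < r ≤ b`, and `M(x) = I` for `|x| ≤ a`,
`M(x)w = (ζ(r)/(rζ'(r))) P_x(w) + (rζ'(r)/ζ(r))(w − P_x(w))` for `a < |x| ≤ b` (`r = |x|`),
the function `β` is continuous and strictly positive on `[0, b]`, each `M(x)` is a symmetric
positive definite linear map, and `x ↦ M(x)` is continuous on the closed ball of radius `b`. -/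
theorem stmt11 (a b R : ℝ) (ha : 0 < a) (hab : a < b) (hbR : b < R)
    (η ζ : ℝ → ℝ)
    (hη : ∀ r : ℝ, η r =
      (a ^ 2 * (R - b) + r * (a ^ 2 + (b - 2 * a) * R)) / ((b - r) * (R - b) + (b - a) ^ 2))
    (hζ : ∀ r : ℝ, ζ r = if r < a then r else η r)
    (β : ℝ → ℝ) (hβ0 : β 0 = 1)
    (hβ : ∀ r : ℝ, 0 < r → r ≤ b → β r = ζ r * deriv ζ r / r)
    (M : EuclideanSpace ℝ (Fin 2) → (EuclideanSpace ℝ (Fin 2) →L[ℝ] EuclideanSpace ℝ (Fin 2)))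
    (hM1 : ∀ x : EuclideanSpace ℝ (Fin 2), ‖x‖ ≤ a →
      M x = ContinuousLinearMap.id ℝ (EuclideanSpace ℝ (Fin 2)))
    (hM2 : ∀ x : EuclideanSpace ℝ (Fin 2), a < ‖x‖ → ‖x‖ ≤ b → ∀ w,
      M x w = (ζ ‖x‖ / (‖x‖ * deriv ζ ‖x‖)) • radialProj x w +
        ((‖x‖ * deriv ζ ‖x‖) / ζ ‖x‖) • (w - radialProj x w)) :
    ContinuousOn β (Set.Icc 0 b) ∧
    (∀ r ∈ Set.Icc (0 : ℝ) b, 0 < β r) ∧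
    (∀ x : EuclideanSpace ℝ (Fin 2), ‖x‖ ≤ b →
      (∀ w z : EuclideanSpace ℝ (Fin 2), ⟪M x w, z⟫ = ⟪w, M x z⟫) ∧
      (∀ w : EuclideanSpace ℝ (Fin 2), w ≠ 0 → 0 < ⟪M x w, w⟫)) ∧
    ContinuousOn M (Metric.closedBall (0 : EuclideanSpace ℝ (Fin 2)) b) := by
  exact ⟨Stmt11Aux.beta_cont ha hab hbR hη hζ hβ0 hβ,
    Stmt11Aux.beta_pos ha hab hbR hη hζ hβ0 hβ,
    fun x hx => Stmt11Aux.M_sym_pd ha hab hbR hη hζ hM1 hM2 x hx,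
    Stmt11Aux.M_contOn ha hab hbR hη hζ hM1 hM2⟩

end
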